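/- Every graph G of clique-width at most k with more than k vertices contains two distinct vertices x and y with |N(x) ⊗ N(y)| ≤ 2k - 2, where N(x) ⊗ N(y) is the set of vertices other than x,y adjacent to exactly one of x,y. -/
import Mathlib


open scoped Classical

/-- `k`-expressions over a vertex type `V`: create a vertex with a label,
disjoint union, rename a label, or join two label classes completely. -/
inductive CWExpr (V : Type*) (k : ℕ) : Type _ where
  | single : V → Fin k → CWExpr V k
  | union : CWExpr V k → CWExpr V k → CWExpr V k
  | relabel : Fin k → Fin k → CWExpr V k → CWExpr V k
  | join : Fin k → Fin k → CWExpr V k → CWExpr V k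

namespace CWExpr

variable {V : Type*} [DecidableEq V] {k : ℕ}

/-- The set of vertices created by an expression. -/
def verts : CWExpr V k → Finset V
  | single v _ => {v}
  | union a b => verts a ∪ verts b
  | relabel _ _ a => verts a
  | join _ _ a => verts a

/-- The label of a vertex in the graph built by an expression. -/
def label : CWExpr V k → V → Fin k
  | single _ i, _ => i
  | union a b, v => if v ∈ verts a then label a v else label b v
  | relabel i j a, v => if label a v = i then j else label a v
  | join _ _ a, v => label a v

/-- The adjacency relation of the graph built by an expression. -/
def adj : CWExpr V k → V → V → Prop
  | single _ _, _, _ => False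
  | union a b, u, v => adj a u v ∨ adj b u v
  | relabel _ _ a, u, v => adj a u v
  | join i j a, u, v => adj a u v ∨
      (u ∈ verts a ∧ v ∈ verts a ∧ u ≠ v ∧
        ((label a u = i ∧ label a v = j) ∨ (label a u = j ∧ label a v = i)))

/-- Well-formedness: in a disjoint union the two parts use disjoint vertex sets,
and a vertex is created only once. -/
def OK : CWExpr V k → Prop
  | single _ _ => True
  | union a b => OK a ∧ OK b ∧ Disjoint (verts a) (verts b)
  | relabel _ _ a => OK a
  | join _ _ a => OK a

end CWExpr

/-- `cwd(G) ≤ k`: the graph `G` can be built by a well-formed `k`-expression. -/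
def CliqueWidthLE {V : Type*} [DecidableEq V] [Fintype V] (G : SimpleGraph V) (k : ℕ) : Prop :=
  ∃ e : CWExpr V k, e.OK ∧ e.verts = Finset.univ ∧ ∀ u v, G.Adj u v ↔ e.adj u v

namespace CWExpr

variable {V : Type*} [DecidableEq V] {k : ℕ}

/-- Subexpression relation. -/
inductive Sub : CWExpr V k → CWExpr V k → Prop
  | refl (e) : Sub e e
  | unionL {e a} (b) : Sub e a → Sub e (union a b)
  | unionR {e b} (a) : Sub e b → Sub e (union a b)
  | relabel {e a} (i j : Fin k) : Sub e a → Sub e (relabel i j a)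
  | join {e a} (i j : Fin k) : Sub e a → Sub e (join i j a)

lemma adj_mem : ∀ (e : CWExpr V k) {u v : V}, e.adj u v → u ∈ e.verts ∧ v ∈ e.verts := by
  intro e
  induction e with
  | single v i => intro u w h; exact h.elim
  | union a b iha ihb =>
      intro u w h
      rcases h with h | h
      · exact ⟨Finset.mem_union_left _ (iha h).1, Finset.mem_union_left _ (iha h).2⟩
      · exact ⟨Finset.mem_union_right _ (ihb h).1, Finset.mem_union_right _ (ihb h).2⟩
  | relabel i j a iha => intro u w h; exact iha h
  | join i j a iha =>
      intro u w h
      rcases h with h | ⟨hu, hw, _⟩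
      · exact iha h
      · exact ⟨hu, hw⟩

lemma Sub.verts_subset {e₀ e : CWExpr V k} (h : Sub e₀ e) : e₀.verts ⊆ e.verts := by
  induction h with
  | refl => exact Finset.Subset.refl _
  | unionL b _ ih => exact ih.trans (Finset.subset_union_left)
  | unionR a _ ih => exact ih.trans (Finset.subset_union_right)
  | relabel i j _ ih => exact ih
  | join i j _ ih => exact ih

lemma key {e₀ e : CWExpr V k} (hsub : Sub e₀ e) (hok : e.OK) {x y : V}
    (hx : x ∈ e₀.verts) (hy : y ∈ e₀.verts) (hl : e₀.label x = e₀.label y) :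
    e.label x = e.label y ∧ ∀ z, z ∉ e₀.verts → (e.adj x z ↔ e.adj y z) := by
  induction hsub with
  | refl =>
      refine ⟨hl, fun z hz => ?_⟩
      constructor
      · intro h; exact absurd (adj_mem e₀ h).2 hz
      · intro h; exact absurd (adj_mem e₀ h).2 hz
  | @unionL a b hs ih =>
      obtain ⟨oka, okb, hdisj⟩ := hok
      obtain ⟨hlab, hadj⟩ := ih oka
      have hxa : x ∈ a.verts := hs.verts_subset hx
      have hya : y ∈ a.verts := hs.verts_subset hy
      have hxb : x ∉ b.verts := fun h => (Finset.disjoint_left.mp hdisj hxa) h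
      have hyb : y ∉ b.verts := fun h => (Finset.disjoint_left.mp hdisj hya) h
      constructor
      · simp only [label, if_pos hxa, if_pos hya, hlab]
      · intro z hz
        have h1 : ¬ b.adj x z := fun h => hxb (adj_mem b h).1
        have h2 : ¬ b.adj y z := fun h => hyb (adj_mem b h).1
        simp only [adj]
        rw [or_iff_left h1, or_iff_left h2]
        exact hadj z hz
  | @unionR b a hs ih =>
      obtain ⟨oka, okb, hdisj⟩ := hok
      obtain ⟨hlab, hadj⟩ := ih okb
      have hxb : x ∈ b.verts := hs.verts_subset hx
      have hyb : y ∈ b.verts := hs.verts_subset hy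
      have hxa : x ∉ a.verts := fun h => (Finset.disjoint_right.mp hdisj hxb) h
      have hya : y ∉ a.verts := fun h => (Finset.disjoint_right.mp hdisj hyb) h
      constructor
      · simp only [label, if_neg hxa, if_neg hya, hlab]
      · intro z hz
        have h1 : ¬ a.adj x z := fun h => hxa (adj_mem a h).1
        have h2 : ¬ a.adj y z := fun h => hya (adj_mem a h).1
        simp only [adj]
        rw [or_iff_right h1, or_iff_right h2]
        exact hadj z hz
  | @relabel a i j hs ih =>
      obtain ⟨hlab, hadj⟩ := ih hok
      refine ⟨?_, fun z hz => hadj z hz⟩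
      simp only [label, hlab]
  | @join a i j hs ih =>
      obtain ⟨hlab, hadj⟩ := ih hok
      refine ⟨hlab, fun z hz => ?_⟩
      have hxa : x ∈ a.verts := hs.verts_subset hx
      have hya : y ∈ a.verts := hs.verts_subset hy
      have hzx : x ≠ z := fun h => hz (h ▸ hx)
      have hzy : y ≠ z := fun h => hz (h ▸ hy)
      simp only [adj]
      rw [hadj z hz]
      constructor
      · rintro (h | ⟨_, hza, _, hc⟩)
        · exact Or.inl h
        · exact Or.inr ⟨hya, hza, hzy, by rw [← hlab]; exact hc⟩
      · rintro (h | ⟨_, hza, _, hc⟩)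
        · exact Or.inl h
        · exact Or.inr ⟨hxa, hza, hzx, by rw [hlab]; exact hc⟩

lemma exists_small (hk : 1 ≤ k) :
    ∀ e : CWExpr V k, k < e.verts.card →
      ∃ e₀, Sub e₀ e ∧ k < e₀.verts.card ∧ e₀.verts.card ≤ 2 * k := by
  intro e
  induction e with
  | single v i =>
      intro h
      simp only [verts, Finset.card_singleton] at h
      omega
  | union a b iha ihb =>
      intro h
      by_cases ha : k < a.verts.card
      · obtain ⟨e₀, hs, h1, h2⟩ := iha ha
        exact ⟨e₀, hs.unionL b, h1, h2⟩
      by_cases hb : k < b.verts.card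
      · obtain ⟨e₀, hs, h1, h2⟩ := ihb hb
        exact ⟨e₀, hs.unionR a, h1, h2⟩
      refine ⟨union a b, Sub.refl _, h, ?_⟩
      have := Finset.card_union_le a.verts b.verts
      simp only [verts]
      omega
  | relabel i j a iha =>
      intro h
      obtain ⟨e₀, hs, h1, h2⟩ := iha h
      exact ⟨e₀, hs.relabel i j, h1, h2⟩
  | join i j a iha =>
      intro h
      obtain ⟨e₀, hs, h1, h2⟩ := iha h
      exact ⟨e₀, hs.join i j, h1, h2⟩

lemma no_expr_zero (e : CWExpr V 0) : False := by
  induction e with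
  | single v i => exact i.elim0
  | union a b iha ihb => exact iha
  | relabel i j a iha => exact iha
  | join i j a iha => exact iha

end CWExpr

/-- Every graph of clique-width at most `k` with more than `k` vertices contains two
distinct vertices `x`, `y` whose neighbourhood symmetric difference (excluding `x`
and `y` themselves) has size at most `2k - 2`. -/
theorem stmt7 {V : Type*} [DecidableEq V] [Fintype V] (G : SimpleGraph V) (k : ℕ)
    (hcw : CliqueWidthLE G k) (hcard : k < Fintype.card V) :
    ∃ x y : V, x ≠ y ∧
      (Finset.univ.filter fun z => z ≠ x ∧ z ≠ y ∧ ¬ (G.Adj x z ↔ G.Adj y z)).card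
        ≤ 2 * k - 2 := by
  obtain ⟨e, hok, hverts, hadj⟩ := hcw
  rcases Nat.eq_zero_or_pos k with rfl | hk
  · exact (CWExpr.no_expr_zero e).elim
  have hcard' : k < e.verts.card := by
    rw [hverts, Finset.card_univ]; exact hcard
  obtain ⟨e₀, hsub, h1, h2⟩ := CWExpr.exists_small hk e hcard'
  -- pigeonhole: two vertices of e₀ share a label
  obtain ⟨x, hx, y, hy, hxy, hl⟩ :=
    Finset.exists_ne_map_eq_of_card_lt_of_maps_to
      (t := (Finset.univ : Finset (Fin k)))
      (by simpa using h1) (fun a _ => Finset.mem_univ (e₀.label a))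
  obtain ⟨-, hiff⟩ := CWExpr.key hsub hok hx hy hl
  refine ⟨x, y, hxy, ?_⟩
  have hsubset :
      (Finset.univ.filter fun z => z ≠ x ∧ z ≠ y ∧ ¬ (G.Adj x z ↔ G.Adj y z))
        ⊆ e₀.verts \ {x, y} := by
    intro z hz
    simp only [Finset.mem_filter] at hz
    obtain ⟨-, hzx, hzy, hne⟩ := hz
    rw [Finset.mem_sdiff, Finset.mem_insert, Finset.mem_singleton]
    refine ⟨?_, by tauto⟩
    by_contra hzv
    exact hne (by rw [hadj, hadj]; exact hiff z hzv)
  calc (Finset.univ.filter fun z => z ≠ x ∧ z ≠ y ∧ ¬ (G.Adj x z ↔ G.Adj y z)).card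
      ≤ (e₀.verts \ {x, y}).card := Finset.card_le_card hsubset
    _ ≤ e₀.verts.card - ({x, y} : Finset V).card := by
        rw [Finset.card_sdiff_of_subset (by
          intro z hz
          rw [Finset.mem_insert, Finset.mem_singleton] at hz
          rcases hz with rfl | rfl <;> assumption)]
    _ ≤ 2 * k - 2 := by
        have : ({x, y} : Finset V).card = 2 := Finset.card_pair hxy
        omega
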